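/- The complex vector space of polynomial solutions of a second-order difference equation A(x)u(x+h) + B(x)u(x) + C(x)u(x-h) = 0, with A, B, C polynomials and A and C not identically zero, has dimension at most 2. -/

import Mathlib

/-- The space of polynomial solutions of the difference equation
`A(x)u(x+h) + B(x)u(x) + C(x)u(x-h) = 0`. -/
noncomputable def solSpace (h : ℂ) (A B C : Polynomial ℂ) : Submodule ℂ (Polynomial ℂ) where
  carrier := {u | ∀ x : ℂ,
    A.eval x * u.eval (x + h) + B.eval x * u.eval x + C.eval x * u.eval (x - h) = 0}
  add_mem' := by
    intro a b ha hb
    intro x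
    have h1 := ha x
    have h2 := hb x
    simp only [Polynomial.eval_add]
    linear_combination h1 + h2
  zero_mem' := by intro x; simp
  smul_mem' := by
    intro c a ha x
    have h1 := ha x
    simp only [Polynomial.eval_smul, smul_eq_mul]
    linear_combination c * h1

/-- the complex vector space of polynomial solutions of a second-order
difference equation with polynomial coefficients, `A` and `C` not identically zero,
has dimension at most 2. -/
theorem stmt1 (h : ℂ) (hh : h ≠ 0) (A B C : Polynomial ℂ)
    (hA : A ≠ 0) (hC : C ≠ 0) :
    Module.rank ℂ (solSpace h A B C) ≤ 2 := by
  classical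
  -- bound on the "heights" of the roots of A in direction h
  have hns : 0 < Complex.normSq h := Complex.normSq_pos.mpr hh
  obtain ⟨m, hm⟩ : ∃ m : ℝ, ∀ r ∈ A.roots, (r * (starRingEnd ℂ) h).re ≤ m := by
    have hfin : ((fun r : ℂ => (r * (starRingEnd ℂ) h).re) ''
        (A.roots.toFinset : Set ℂ)).Finite :=
      (A.roots.toFinset.finite_toSet).image _
    obtain ⟨m, hm⟩ := hfin.bddAbove
    refine ⟨m, fun r hr => ?_⟩
    exact hm ⟨r, by simpa using hr, rfl⟩
  set x₀ : ℂ := (((m + 1) / Complex.normSq h : ℝ) : ℂ) * h with hx₀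
  have hre : ∀ n : ℕ, ((x₀ + n * h) * (starRingEnd ℂ) h).re = m + 1 + n * Complex.normSq h := by
    intro n
    have : (x₀ + n * h) * (starRingEnd ℂ) h
        = (((m + 1) / Complex.normSq h : ℝ) : ℂ) * (h * (starRingEnd ℂ) h)
          + (n : ℂ) * (h * (starRingEnd ℂ) h) := by ring
    rw [this, Complex.mul_conj]
    push_cast
    field_simp
    rw [mul_div_cancel_left₀ _ (by exact_mod_cast hns.ne' : (Complex.normSq h : ℂ) ≠ 0)]
    simp only [Complex.add_re, Complex.ofReal_re, Complex.one_re, Complex.mul_re, Complex.ofReal_im, Complex.natCast_re, Complex.natCast_im]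
    ring
  have hAx : ∀ n : ℕ, A.eval (x₀ + n * h) ≠ 0 := by
    intro n h0
    have hr : (x₀ + n * h) ∈ A.roots := by
      rw [Polynomial.mem_roots hA]; exact h0
    have h1 := hm _ hr
    rw [hre n] at h1
    nlinarith [mul_nonneg (Nat.cast_nonneg (α := ℝ) n) hns.le]
  -- the evaluation map
  let φ : (solSpace h A B C) →ₗ[ℂ] ℂ × ℂ :=
    { toFun := fun u => (Polynomial.eval (x₀ - h) u.1, Polynomial.eval x₀ u.1)
      map_add' := by intro u v; simp
      map_smul' := by intro c u; simp }
  have hker : ∀ u : (solSpace h A B C), φ u = 0 → u = 0 := by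
    intro u hu
    have h1 : Polynomial.eval (x₀ - h) u.1 = 0 := congrArg Prod.fst hu
    have h2 : Polynomial.eval x₀ u.1 = 0 := congrArg Prod.snd hu
    have key : ∀ n : ℕ, Polynomial.eval (x₀ + n * h - h) u.1 = 0 ∧
        Polynomial.eval (x₀ + n * h) u.1 = 0 := by
      intro n
      induction n with
      | zero => simpa using ⟨h1, h2⟩
      | succ k ih =>
        have heq := u.2 (x₀ + k * h)
        rw [ih.1, ih.2] at heq
        have h3 : Polynomial.eval (x₀ + k * h + h) u.1 = 0 := by
          field_simp at heq
          simp only [mul_zero, zero_mul, add_zero] at heq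
          exact (mul_eq_zero.mp heq).resolve_left (hAx k)
        constructor
        · have : x₀ + (k + 1 : ℕ) * h - h = x₀ + k * h := by push_cast; ring
          rw [this]; exact ih.2
        · have : x₀ + (k + 1 : ℕ) * h = x₀ + k * h + h := by push_cast; ring
          rw [this]; exact h3
    have hinf : {x : ℂ | u.1.IsRoot x}.Infinite := by
      apply Set.infinite_of_injective_forall_mem (f := fun n : ℕ => x₀ + n * h)
      · intro a b hab
        simp only [add_right_inj] at hab
        have := mul_right_cancel₀ hh hab
        exact_mod_cast this
      · intro n
        exact (key n).2
    have : u.1 = 0 := Polynomial.eq_zero_of_infinite_isRoot _ hinf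
    exact Subtype.ext this
  have hinj : Function.Injective φ :=
    LinearMap.ker_eq_bot.mp (LinearMap.ker_eq_bot'.mpr hker)
  have hle := LinearMap.rank_le_of_injective φ hinj
  have : Module.rank ℂ (ℂ × ℂ) = 2 := by
    rw [rank_prod', Module.rank_self]
    exact one_add_one_eq_two
  rwa [this] at hle
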